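/- The only Riemann surface that strictly contains ℂ as a proper open subset (i.e., a connected Riemann surface admitting an open embedding of ℂ with nonempty complement of the image) and is obtained by adding at least one point is compact; equivalently, if a connected Riemann surface X contains an open subset biholomorphic to ℂ whose complement in X is nonempty and X minus that open set is finite, then X is biholomorphic to the Riemann sphere. -/

import Mathlib

open Manifold Set Metric Filter Topology Function

/-- Key local lemma: near a point `p` of the complement of the image of `e`, which is
isolated in that complement within an open set `O`, there is a compact set `K ⊆ O`
absorbing the tail of `e` (the image of the complement of a large ball). -/
lemma riemann_key {X : Type*} [TopologicalSpace X] [T2Space X] [ChartedSpace ℂ X]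
    [IsManifold 𝓘(ℂ, ℂ) (⊤ : ℕ∞) X]
    (e : ℂ → X) (he : Topology.IsOpenEmbedding e)
    (hhol : MDifferentiable 𝓘(ℂ, ℂ) 𝓘(ℂ, ℂ) e)
    (p : X) (hp : p ∉ Set.range e) (O : Set X) (hO : IsOpen O) (hpO : p ∈ O)
    (hOF : ∀ x ∈ O, x ∉ Set.range e → x = p) :
    ∃ K : Set X, IsCompact K ∧ K ⊆ O ∧ ∃ (z₁ : ℂ) (R : ℝ),
      ∀ z : ℂ, R < dist z z₁ → e z ∈ K := by
  classical
  set φ := chartAt ℂ p with hφdef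
  set c : ℂ := φ p with hcdef
  -- the image of `φ.source ∩ O` is an open neighborhood of `c`
  have hTopen : IsOpen (φ '' (φ.source ∩ O)) :=
    φ.isOpen_image_of_subset_source (φ.open_source.inter hO) inter_subset_left
  have hcT : c ∈ φ '' (φ.source ∩ O) := ⟨p, ⟨mem_chart_source ℂ p, hpO⟩, rfl⟩
  obtain ⟨r, hr0, hrT⟩ := (Metric.nhds_basis_closedBall.mem_iff).1 (hTopen.mem_nhds hcT)
  have hTtarget : φ '' (φ.source ∩ O) ⊆ φ.target := by
    rintro _ ⟨x, hx, rfl⟩; exact φ.map_source hx.1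
  have hrtarget : closedBall c r ⊆ φ.target := fun w hw => hTtarget (hrT hw)
  have hA : ∀ w ∈ closedBall c r, φ.symm w ∈ φ.source ∧ φ.symm w ∈ O ∧ φ (φ.symm w) = w := by
    intro w hw
    obtain ⟨x, hx, rfl⟩ := hrT hw
    rw [φ.left_inv hx.1]
    exact ⟨hx.1, hx.2, rfl⟩
  have hB : ∀ w ∈ closedBall c r, w ≠ c → φ.symm w ∈ Set.range e := by
    intro w hw hwc
    by_contra h
    have : φ.symm w = p := hOF _ (hA w hw).2.1 h
    apply hwc
    rw [← (hA w hw).2.2, this]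
  -- inverse of `e` via the partial homeomorphism
  set P := he.toOpenPartialHomeomorph e with hPdef
  set f : ℂ → ℂ := fun w => P.symm (φ.symm w) with hfdef
  have hC : ∀ w ∈ closedBall c r, w ≠ c → e (f w) = φ.symm w := by
    intro w hw hwc
    exact Topology.IsOpenEmbedding.toOpenPartialHomeomorph_right_inv e he (hB w hw hwc)
  have hφef : ∀ w ∈ closedBall c r, w ≠ c → φ (e (f w)) = w := by
    intro w hw hwc; rw [hC w hw hwc]; exact (hA w hw).2.2
  have hfinj : ∀ w ∈ closedBall c r, w ≠ c → ∀ w' ∈ closedBall c r, w' ≠ c →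
      f w = f w' → w = w' := by
    intro w hw hwc w' hw' hwc' hff
    have : φ.symm w = φ.symm w' := by
      rw [← hC w hw hwc, ← hC w' hw' hwc', hff]
    rw [← (hA w hw).2.2, ← (hA w' hw').2.2, this]
  have hfΩ : ∀ w ∈ closedBall c r, w ≠ c → e (f w) ∈ φ.source := by
    intro w hw hwc; rw [hC w hw hwc]; exact (hA w hw).1
  -- continuity of f on the punctured ball
  have hfc : ∀ w ∈ closedBall c r, w ≠ c → ContinuousAt f w := by
    intro w hw hwc
    have h1 : ContinuousAt φ.symm w := φ.symm.continuousAt (by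
      rw [OpenPartialHomeomorph.symm_source]; exact hrtarget hw)
    have h2 : ContinuousAt P.symm (φ.symm w) := P.symm.continuousAt (by
      rw [OpenPartialHomeomorph.symm_source, Topology.IsOpenEmbedding.toOpenPartialHomeomorph_target]
      exact hB w hw hwc)
    exact h2.comp h1
  -- the holomorphic read-out of e in the chart
  set h : ℂ → ℂ := (φ : X → ℂ) ∘ e with hhdef
  set Ω : Set ℂ := e ⁻¹' φ.source with hΩdef
  have hΩopen : IsOpen Ω := φ.open_source.preimage he.continuous
  have hhd : DifferentiableOn ℂ h Ω := by
    intro z hz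
    have h1 : MDifferentiableAt 𝓘(ℂ, ℂ) 𝓘(ℂ, ℂ) (φ : X → ℂ) (e z) :=
      mdifferentiableAt_atlas (I := 𝓘(ℂ, ℂ)) (chart_mem_atlas ℂ p) hz
    exact ((MDifferentiableAt.comp z h1 (hhol z)).differentiableAt).differentiableWithinAt
  have hana : AnalyticOnNhd ℂ h Ω := hhd.analyticOnNhd hΩopen
  have hinj : ∀ z ∈ Ω, ∀ z' ∈ Ω, h z = h z' → z = z' := by
    intro z hz z' hz' hzz
    have : e z = e z' := φ.injOn hz hz' hzz
    exact he.injective this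
  have hfmemΩ : ∀ w ∈ closedBall c r, w ≠ c → f w ∈ Ω := by
    intro w hw hwc; exact hfΩ w hw hwc
  -- differentiability of f at non-critical points
  have hfd : ∀ w ∈ ball c r, w ≠ c → deriv h (f w) ≠ 0 → DifferentiableAt ℂ f w := by
    intro w hw hwc hne
    have hwcb : w ∈ closedBall c r := ball_subset_closedBall hw
    have h1 : HasDerivAt h (deriv h (f w)) (f w) :=
      (hhd.differentiableAt (hΩopen.mem_nhds (hfmemΩ w hwcb hwc))).hasDerivAt
    have h2 : ContinuousAt f w := hfc w hwcb hwc
    have h3 : ∀ᶠ y in 𝓝 w, h (f y) = y := by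
      have : (ball c r \ {c}) ∈ 𝓝 w :=
        (isOpen_ball.sdiff isClosed_singleton).mem_nhds ⟨hw, hwc⟩
      filter_upwards [this] with y hy
      exact hφef y (ball_subset_closedBall hy.1) hy.2
    exact (HasDerivAt.of_local_left_inverse h2 h1 hne h3).differentiableAt
  -- the annulus and the reference point z₁
  set A : Set ℂ := ball c r \ closedBall c (r / 2) with hAdef
  have hAopen : IsOpen A := isOpen_ball.sdiff isClosed_closedBall
  have hAsub : ∀ w ∈ A, w ∈ closedBall c r ∧ w ≠ c := by
    intro w hw
    refine ⟨ball_subset_closedBall hw.1, ?_⟩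
    intro hwc
    exact hw.2 (by rw [hwc]; exact mem_closedBall_self (by linarith))
  set w₁ : ℂ := c + (3 * r / 4 : ℝ) with hw₁def
  have hw₁A : w₁ ∈ A := by
    have hd : dist w₁ c = 3 * r / 4 := by
      rw [hw₁def, dist_eq_norm, add_sub_cancel_left, Complex.norm_real,
        Real.norm_eq_abs, abs_of_nonneg (by linarith)]
    constructor
    · rw [mem_ball, hd]; linarith
    · rw [mem_closedBall, hd]; intro hcon; linarith
  -- f '' A is open
  have hfAopen : IsOpen (f '' A) := by
    have h1 : IsOpen (φ.symm '' A) := φ.symm.isOpen_image_of_subset_source hAopen (by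
      rw [OpenPartialHomeomorph.symm_source]
      exact fun w hw => hrtarget (hAsub w hw).1)
    have h2 : IsOpen (P.symm '' (φ.symm '' A)) :=
      P.symm.isOpen_image_of_subset_source h1 (by
        rw [OpenPartialHomeomorph.symm_source, Topology.IsOpenEmbedding.toOpenPartialHomeomorph_target]
        rintro _ ⟨w, hw, rfl⟩
        exact hB w (hAsub w hw).1 (hAsub w hw).2)
    have : f '' A = P.symm '' (φ.symm '' A) := by
      rw [← image_comp]; rfl
    rw [this]; exact h2
  set z₁ : ℂ := f w₁ with hz₁def
  obtain ⟨δ, hδ0, hδ⟩ := Metric.isOpen_iff.1 hfAopen z₁ ⟨w₁, hw₁A, rfl⟩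
  -- on the inner punctured ball, f stays δ-away from z₁
  have hfar : ∀ w ∈ closedBall c (r / 2), w ≠ c → δ ≤ dist (f w) z₁ := by
    intro w hw hwc
    by_contra hcon
    push_neg at hcon
    obtain ⟨a, ha, hfa⟩ := hδ (mem_ball.2 hcon)
    have hwcb : w ∈ closedBall c r := closedBall_subset_closedBall (by linarith) hw
    have : w = a := hfinj w hwcb hwc a (hAsub a ha).1 (hAsub a ha).2 hfa.symm
    rw [this] at hw
    exact ha.2 hw
  have hfne : ∀ w ∈ closedBall c (r / 2), w ≠ c → f w ≠ z₁ := by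
    intro w hw hwc hcon
    have := hfar w hw hwc
    rw [hcon, dist_self] at this
    linarith
  set g : ℂ → ℂ := fun w => (f w - z₁)⁻¹ with hgdef
  -- g is differentiable on the inner punctured ball
  have hgd : DifferentiableOn ℂ g (ball c (r / 2) \ {c}) := by
    intro w₀ hw₀
    have hw₀cb : w₀ ∈ closedBall c (r / 2) := ball_subset_closedBall hw₀.1
    have hw₀r : w₀ ∈ ball c r := ball_subset_ball (by linarith) hw₀.1
    have hw₀cbr : w₀ ∈ closedBall c r := ball_subset_closedBall hw₀r
    have hcg : ContinuousAt g w₀ := by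
      apply ContinuousAt.inv₀
      · exact (hfc w₀ hw₀cbr hw₀.2).sub continuousAt_const
      · exact sub_ne_zero.2 (hfne w₀ hw₀cb hw₀.2)
    have hev : ∀ᶠ w in 𝓝[≠] w₀, DifferentiableAt ℂ g w := by
      set z₀ : ℂ := f w₀ with hz₀def
      have hz₀Ω : z₀ ∈ Ω := hfmemΩ w₀ hw₀cbr hw₀.2
      have hda : AnalyticAt ℂ (deriv h) z₀ := (hana.deriv) z₀ hz₀Ω
      have hdich := hda.eventually_eq_zero_or_eventually_ne_zero
      have hne0 : ∀ᶠ z in 𝓝[≠] z₀, deriv h z ≠ 0 := by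
        rcases hdich with hzero | hne
        · exfalso
          obtain ⟨U, hUzero, hUopen, hz₀U⟩ := _root_.eventually_nhds_iff.1 hzero
          obtain ⟨ρ, hρ0, hρ⟩ := Metric.isOpen_iff.1 (hUopen.inter hΩopen) z₀ ⟨hz₀U, hz₀Ω⟩
          have hballΩ : ball z₀ ρ ⊆ Ω := fun x hx => (hρ hx).2
          have hdball : DifferentiableOn ℂ h (ball z₀ ρ) := hhd.mono hballΩ
          have hfd0 : ∀ x ∈ ball z₀ ρ, fderivWithin ℂ h (ball z₀ ρ) x = 0 := by
            intro x hx
            rw [fderivWithin_of_isOpen isOpen_ball hx, ← toSpanSingleton_deriv,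
              hUzero x (hρ hx).1]
            ext
            simp [ContinuousLinearMap.smulRight_apply]
          set z₂ : ℂ := z₀ + (ρ / 2 : ℝ) with hz₂def
          have hz₂ : z₂ ∈ ball z₀ ρ := by
            rw [mem_ball, hz₂def, dist_eq_norm, add_sub_cancel_left, Complex.norm_real,
              Real.norm_eq_abs, abs_of_nonneg (by linarith)]
            linarith
          have hz₀b : z₀ ∈ ball z₀ ρ := mem_ball_self hρ0
          have hconst : h z₀ = h z₂ :=
            (convex_ball z₀ ρ).is_const_of_fderivWithin_eq_zero hdball hfd0 hz₀b hz₂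
          have : z₀ = z₂ := hinj z₀ hz₀Ω z₂ (hballΩ hz₂) hconst
          rw [hz₂def] at this
          have : ((ρ / 2 : ℝ) : ℂ) = 0 := left_eq_add.mp this
          have : (ρ / 2 : ℝ) = 0 := by exact_mod_cast this
          linarith
        · exact hne
      rw [eventually_nhdsWithin_iff, _root_.eventually_nhds_iff] at hne0
      obtain ⟨U, hU, hUopen, hz₀U⟩ := hne0
      have hfpre : f ⁻¹' U ∈ 𝓝 w₀ := (hfc w₀ hw₀cbr hw₀.2).preimage_mem_nhds
        (hUopen.mem_nhds hz₀U)
      have hD₂ : (ball c (r / 2) \ {c}) ∈ 𝓝 w₀ :=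
        (isOpen_ball.sdiff isClosed_singleton).mem_nhds hw₀
      rw [eventually_nhdsWithin_iff]
      filter_upwards [hfpre, hD₂] with w hwU hwD hwne
      have hwcb2 : w ∈ closedBall c (r / 2) := ball_subset_closedBall hwD.1
      have hwcbr : w ∈ closedBall c r := closedBall_subset_closedBall (by linarith) hwcb2
      have hfwz₀ : f w ≠ z₀ := by
        intro hcon
        exact hwne (hfinj w hwcbr hwD.2 w₀ hw₀cbr hw₀.2 hcon)
      have hder : deriv h (f w) ≠ 0 := hU (f w) hwU hfwz₀
      have hdf : DifferentiableAt ℂ f w :=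
        hfd w (ball_subset_ball (by linarith) hwD.1) hwD.2 hder
      exact (hdf.sub_const z₁).inv (sub_ne_zero.2 (hfne w hwcb2 hwD.2))
    exact ((Complex.analyticAt_of_differentiable_on_punctured_nhds_of_continuousAt hev
      hcg).differentiableAt).differentiableWithinAt
  -- boundedness of g near c
  have hbdd : BddAbove (norm ∘ g '' (ball c (r / 2) \ {c})) := by
    refine ⟨δ⁻¹, ?_⟩
    rintro _ ⟨w, hw, rfl⟩
    have hwcb : w ∈ closedBall c (r / 2) := ball_subset_closedBall hw.1
    have h1 : δ ≤ ‖f w - z₁‖ := by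
      have := hfar w hwcb hw.2
      rwa [dist_eq_norm] at this
    simp only [comp_apply, hgdef, norm_inv]
    exact inv_anti₀ hδ0 h1
  set L : ℂ := limUnder (𝓝[≠] c) g with hLdef
  set G : ℂ → ℂ := update g c L with hGdef
  have hGd : DifferentiableOn ℂ G (ball c (r / 2)) :=
    Complex.differentiableOn_update_limUnder_of_bddAbove
      (ball_mem_nhds c (by linarith)) hgd hbdd
  have hGg : ∀ w, w ≠ c → G w = g w := fun w hw => update_of_ne hw _ _
  have hGc : G c = L := update_self c L g
  have hnhds : 𝓝[ball c (r / 2) \ {c}] c = 𝓝[≠] c := by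
    rw [diff_eq, inter_comm, ← nhdsWithin_restrict' ({c}ᶜ) (ball_mem_nhds c (by linarith))]
  haveI hNB : (𝓝[ball c (r / 2) \ {c}] c).NeBot := by
    rw [hnhds]; exact inferInstance
  -- the limit L must vanish
  have hL0 : L = 0 := by
    by_contra hL
    have htendG : Tendsto G (𝓝 c) (𝓝 L) := by
      have := (hGd.differentiableAt (ball_mem_nhds c (by linarith))).continuousAt
      rwa [ContinuousAt, hGc] at this
    have htendg : Tendsto g (𝓝[ball c (r / 2) \ {c}] c) (𝓝 L) :=
      Tendsto.congr' (by filter_upwards [self_mem_nhdsWithin] with w hw using (hGg w hw.2))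
        (htendG.mono_left nhdsWithin_le_nhds)
    have htendf : Tendsto f (𝓝[ball c (r / 2) \ {c}] c) (𝓝 (z₁ + L⁻¹)) := by
      have h1 : Tendsto (fun w => z₁ + (g w)⁻¹) (𝓝[ball c (r / 2) \ {c}] c)
          (𝓝 (z₁ + L⁻¹)) := tendsto_const_nhds.add (htendg.inv₀ hL)
      refine Tendsto.congr' ?_ h1
      filter_upwards [self_mem_nhdsWithin] with w hw
      simp only [hgdef, inv_inv, add_sub_cancel]
    have htende : Tendsto (fun w => e (f w)) (𝓝[ball c (r / 2) \ {c}] c)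
        (𝓝 (e (z₁ + L⁻¹))) := (he.continuous.continuousAt).tendsto.comp htendf
    have htendsymm : Tendsto (φ.symm : ℂ → X) (𝓝 c) (𝓝 p) := by
      have h1 : ContinuousAt (φ.symm : ℂ → X) c := φ.symm.continuousAt (by
        rw [OpenPartialHomeomorph.symm_source]
        exact hrtarget (mem_closedBall_self hr0.le))
      have h2 : (φ.symm : ℂ → X) c = p := φ.left_inv (mem_chart_source ℂ p)
      rw [ContinuousAt, h2] at h1
      exact h1
    have htendsymm' : Tendsto (fun w => e (f w)) (𝓝[ball c (r / 2) \ {c}] c) (𝓝 p) := by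
      refine Tendsto.congr' ?_ (htendsymm.mono_left nhdsWithin_le_nhds)
      filter_upwards [self_mem_nhdsWithin] with w hw
      exact (hC w (closedBall_subset_closedBall (by linarith)
        (ball_subset_closedBall hw.1)) hw.2).symm
    have : e (z₁ + L⁻¹) = p := tendsto_nhds_unique htende htendsymm'
    exact hp ⟨_, this⟩
  -- open mapping at c
  have hGana : AnalyticAt ℂ G c := hGd.analyticAt (ball_mem_nhds c (by linarith))
  have hmap : 𝓝 (G c) ≤ map G (𝓝 c) := by
    rcases hGana.eventually_constant_or_nhds_le_map_nhds_aux with hcst | hle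
    · exfalso
      obtain ⟨U, hUG, hUopen, hcU⟩ := _root_.eventually_nhds_iff.1 hcst
      have hnon : (U ∩ (ball c (r / 2) \ {c})).Nonempty :=
        Filter.nonempty_of_mem (inter_mem
          (mem_nhdsWithin_of_mem_nhds (hUopen.mem_nhds hcU)) self_mem_nhdsWithin)
      obtain ⟨w, hwU, hwD⟩ := hnon
      have h0 : G w = 0 := by rw [hUG w hwU, hGc, hL0]
      rw [hGg w hwD.2] at h0
      exact (inv_ne_zero (sub_ne_zero.2
        (hfne w (ball_subset_closedBall hwD.1) hwD.2))) h0
    · exact hle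
  rw [hGc, hL0] at hmap
  have himg : G '' ball c (r / 2) ∈ 𝓝 (0 : ℂ) :=
    hmap (image_mem_map (ball_mem_nhds c (by linarith)))
  obtain ⟨ε, hε0, hεsub⟩ := Metric.mem_nhds_iff.1 himg
  -- conclusion
  have hKcpt : IsCompact ((φ.symm : ℂ → X) '' closedBall c r) :=
    (isCompact_closedBall c r).image_of_continuousOn (φ.continuousOn_symm.mono hrtarget)
  refine ⟨(φ.symm : ℂ → X) '' closedBall c r, hKcpt, ?_, z₁, ε⁻¹, ?_⟩
  · rintro _ ⟨w, hw, rfl⟩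
    exact (hA w hw).2.1
  · intro z hz
    have hεinv : (0 : ℝ) ≤ ε⁻¹ := inv_nonneg.2 hε0.le
    have hzz₁ : z ≠ z₁ := by
      intro hcon
      rw [hcon, dist_self] at hz
      exact absurd hz (not_lt.2 hεinv)
    have hnormpos : 0 < ‖z - z₁‖ := by
      rw [← dist_eq_norm]
      exact lt_of_le_of_lt hεinv hz
    have hζball : (z - z₁)⁻¹ ∈ ball (0 : ℂ) ε := by
      rw [mem_ball, dist_zero_right, norm_inv]
      rw [inv_lt_comm₀ hnormpos hε0]
      rwa [← dist_eq_norm]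
    obtain ⟨w, hwball, hGw⟩ := hεsub hζball
    have hζ0 : (z - z₁)⁻¹ ≠ 0 := inv_ne_zero (sub_ne_zero.2 hzz₁)
    have hwc : w ≠ c := by
      intro hcon
      rw [hcon, hGc, hL0] at hGw
      exact hζ0 hGw.symm
    have hgw : g w = (z - z₁)⁻¹ := by rw [← hGg w hwc, hGw]
    have hfz : f w = z := by
      have h1 : f w - z₁ = z - z₁ := inv_injective hgw
      exact sub_left_inj.mp h1
    have hwcb : w ∈ closedBall c r :=
      closedBall_subset_closedBall (by linarith) (ball_subset_closedBall hwball)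
    rw [← hfz, hC w hwcb hwc]
    exact ⟨w, hwcb, rfl⟩

/-- If a connected Riemann surface `X` contains an open subset biholomorphic to `ℂ`
(via a holomorphic open embedding `e : ℂ → X`) whose complement in `X` is nonempty and
finite, then `X` is compact and the complement consists of exactly one point, i.e. `X`
is (biholomorphic to) the Riemann sphere `ℂ ∪ {∞}`. -/
theorem stmt3 {X : Type*} [TopologicalSpace X] [T2Space X] [ChartedSpace ℂ X]
    [IsManifold 𝓘(ℂ, ℂ) (⊤ : ℕ∞) X] [ConnectedSpace X]
    (e : ℂ → X) (he : Topology.IsOpenEmbedding e)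
    (hhol : MDifferentiable 𝓘(ℂ, ℂ) 𝓘(ℂ, ℂ) e)
    (hne : (Set.range e)ᶜ.Nonempty) (hfin : (Set.range e)ᶜ.Finite) :
    CompactSpace X ∧ ∃ p : X, (Set.range e)ᶜ = {p} := by
  obtain ⟨p, hp⟩ := hne
  have hp' : p ∉ Set.range e := hp
  -- a convenient open set around any point of the complement, inside a given open set
  have hOgen : ∀ q : X, q ∉ Set.range e → ∀ V : Set X, IsOpen V → q ∈ V →
      ∃ O : Set X, IsOpen O ∧ q ∈ O ∧ O ⊆ V ∧ ∀ x ∈ O, x ∉ Set.range e → x = q := by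
    intro q hq V hV hqV
    refine ⟨V ∩ ((Set.range e)ᶜ \ {q})ᶜ, hV.inter ?_, ⟨hqV, ?_⟩, inter_subset_left, ?_⟩
    · exact ((hfin.subset diff_subset).isClosed).isOpen_compl
    · exact fun hmem => hmem.2 rfl
    · intro x hx hxe
      by_contra hxq
      exact hx.2 ⟨hxe, hxq⟩
  -- the complement is a single point
  have hsingle : ∀ q, q ∉ Set.range e → q = p := by
    intro q hq
    by_contra hqp
    obtain ⟨U, V, hU, hV, hqU, hpV, hUV⟩ := t2_separation hqp
    obtain ⟨Oq, hOqo, hqOq, hOqU, hOq⟩ := hOgen q hq U hU hqU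
    obtain ⟨Op, hOpo, hpOp, hOpV, hOp⟩ := hOgen p hp' V hV hpV
    obtain ⟨Kq, hKqc, hKqO, zq, Rq, hKq⟩ := riemann_key e he hhol q hq Oq hOqo hqOq hOq
    obtain ⟨Kp, hKpc, hKpO, zp, Rp, hKp⟩ := riemann_key e he hhol p hp' Op hOpo hpOp hOp
    set M : ℝ := max 0 (max Rp (Rq + dist zp zq)) + 1 with hMdef
    have hM1 : Rp < M := by
      have h1 : Rp ≤ max Rp (Rq + dist zp zq) := le_max_left _ _
      have h2 : max Rp (Rq + dist zp zq) ≤ max 0 (max Rp (Rq + dist zp zq)) :=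
        le_max_right _ _
      linarith
    have hM2 : Rq + dist zp zq < M := by
      have h1 : Rq + dist zp zq ≤ max Rp (Rq + dist zp zq) := le_max_right _ _
      have h2 : max Rp (Rq + dist zp zq) ≤ max 0 (max Rp (Rq + dist zp zq)) :=
        le_max_right _ _
      linarith
    have hM0 : 0 ≤ M := by
      have := le_max_left (0 : ℝ) (max Rp (Rq + dist zp zq))
      linarith
    set z : ℂ := zp + (M : ℝ) with hzdef
    have hdzp : dist z zp = M := by
      rw [hzdef, dist_eq_norm, add_sub_cancel_left, Complex.norm_real,
        Real.norm_eq_abs, abs_of_nonneg hM0]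
    have h1 : e z ∈ Kp := hKp z (by rw [hdzp]; exact hM1)
    have h2 : e z ∈ Kq := by
      apply hKq z
      have htri : dist z zp ≤ dist z zq + dist zq zp := dist_triangle z zq zp
      have hcomm : dist zq zp = dist zp zq := dist_comm zq zp
      rw [hdzp] at htri
      linarith
    exact absurd (hKqO h2) (fun hmem => Set.disjoint_left.mp hUV (hOqU hmem) (hOpV (hKpO h1)))
  have hset : (Set.range e)ᶜ = {p} :=
    Set.eq_singleton_iff_unique_mem.2 ⟨hp, fun q hq => hsingle q hq⟩
  -- compactness
  obtain ⟨O, hOo, hpO, _, hOq⟩ := hOgen p hp' univ isOpen_univ (mem_univ p)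
  obtain ⟨K, hKc, hKO, z₁, R, hK⟩ := riemann_key e he hhol p hp' O hOo hpO hOq
  have huniv : (univ : Set X) = e '' closedBall z₁ R ∪ K ∪ (Set.range e)ᶜ := by
    apply Set.eq_of_subset_of_subset ?_ (subset_univ _)
    intro x _
    by_cases hx : x ∈ Set.range e
    · obtain ⟨z, rfl⟩ := hx
      by_cases hzR : R < dist z z₁
      · exact Or.inl (Or.inr (hK z hzR))
      · exact Or.inl (Or.inl ⟨z, by rwa [mem_closedBall, ← not_lt], rfl⟩)
    · exact Or.inr hx
  refine ⟨?_, p, hset⟩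
  rw [← isCompact_univ_iff, huniv]
  exact (((isCompact_closedBall z₁ R).image he.continuous).union hKc).union hfin.isCompact
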